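/- Transport of relative monads along a relative adjunction: let (L' ⋙ J) ⊣_{J'} R' be a relative adjunction (L' : A ⥤ B, J : B ⥤ D, J' : A ⥤ E, R' : D ⥤ E) and let T be a relative monad on J. Then the assignment x ↦ R'.obj (T₀ (L'.obj x)), with unit given by transposing 𝟙 followed by R' applied to the unit of T, and extension given by transposing, applying †, and applying R', defines a relative monad on J'. Moreover this assignment is functorial: a morphism of relative monads on J induces a morphism of the transported relative monads on J'. -/
import Mathlib


open CategoryTheory CategoryTheory.Limits

universe v₁ v₂ v₃ v₄ v₅ u₁ u₂ u₃ u₄ u₅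

/-- A relative monad on `J : A ⥤ E` in Kleisli-triple form. -/
structure RelMonad {A : Type u₁} {E : Type u₂} [Category.{v₁} A] [Category.{v₂} E]
    (J : A ⥤ E) where
  obj : A → E
  unit : ∀ x : A, J.obj x ⟶ obj x
  ext : ∀ {x y : A}, (J.obj x ⟶ obj y) → (obj x ⟶ obj y)
  ext_unit : ∀ x : A, ext (unit x) = 𝟙 (obj x)
  unit_ext : ∀ {x y : A} (f : J.obj x ⟶ obj y), unit x ≫ ext f = f
  ext_ext : ∀ {x y z : A} (f : J.obj x ⟶ obj y) (g : J.obj y ⟶ obj z),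
    ext (f ≫ ext g) = ext f ≫ ext g

/-- A morphism of relative monads on `J`. -/
structure RelMonadHom {A : Type u₁} {E : Type u₂} [Category.{v₁} A] [Category.{v₂} E]
    {J : A ⥤ E} (T T' : RelMonad J) where
  app : ∀ x : A, T.obj x ⟶ T'.obj x
  unit_app : ∀ x : A, T.unit x ≫ app x = T'.unit x
  ext_app : ∀ {x y : A} (f : J.obj x ⟶ T.obj y),
    T.ext f ≫ app y = app x ≫ T'.ext (f ≫ app y)

/-- A relative adjunction `L ⊣_J R`: bijections `(L.obj x ⟶ c) ≃ (J.obj x ⟶ R.obj c)`,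
natural in `x` and `c`. -/
structure RelAdjCore {A : Type u₁} {E : Type u₂} {C : Type u₃}
    [Category.{v₁} A] [Category.{v₂} E] [Category.{v₃} C]
    (J : A ⥤ E) (L : A ⥤ C) (R : C ⥤ E) where
  equiv : ∀ (x : A) (c : C), (L.obj x ⟶ c) ≃ (J.obj x ⟶ R.obj c)
  nat_left : ∀ {x' x : A} (a : x' ⟶ x) {c : C} (g : L.obj x ⟶ c),
    equiv x' c (L.map a ≫ g) = J.map a ≫ equiv x c g
  nat_right : ∀ {x : A} {c c' : C} (g : L.obj x ⟶ c) (h : c ⟶ c'),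
    equiv x c' (g ≫ h) = equiv x c g ≫ R.map h

/-- The transported unit along a relative adjunction `(L' ⋙ J) ⊣_{J'} R'`. -/
def transUnit {A : Type u₁} {B : Type u₂} {D : Type u₄} {E : Type u₅}
    [Category.{v₁} A] [Category.{v₂} B] [Category.{v₄} D] [Category.{v₅} E]
    {L' : A ⥤ B} {J : B ⥤ D} {J' : A ⥤ E} {R' : D ⥤ E}
    (adj : RelAdjCore J' (L' ⋙ J) R') (T : RelMonad J) (x : A) :
    J'.obj x ⟶ R'.obj (T.obj (L'.obj x)) :=
  adj.equiv x (T.obj (L'.obj x)) (T.unit (L'.obj x))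

/-- The transported extension operator along a relative adjunction. -/
def transExt {A : Type u₁} {B : Type u₂} {D : Type u₄} {E : Type u₅}
    [Category.{v₁} A] [Category.{v₂} B] [Category.{v₄} D] [Category.{v₅} E]
    {L' : A ⥤ B} {J : B ⥤ D} {J' : A ⥤ E} {R' : D ⥤ E}
    (adj : RelAdjCore J' (L' ⋙ J) R') (T : RelMonad J) {x y : A}
    (g : J'.obj x ⟶ R'.obj (T.obj (L'.obj y))) :
    R'.obj (T.obj (L'.obj x)) ⟶ R'.obj (T.obj (L'.obj y)) :=
  R'.map (T.ext ((adj.equiv x (T.obj (L'.obj y))).symm g))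

/-- Transport of a relative monad on `J` along a relative adjunction
`(L' ⋙ J) ⊣_{J'} R'` yields a relative monad on `J'`, functorially in the relative
monad. -/
theorem stmt12 {A : Type u₁} {B : Type u₂} {D : Type u₄} {E : Type u₅}
    [Category.{v₁} A] [Category.{v₂} B] [Category.{v₄} D] [Category.{v₅} E]
    (L' : A ⥤ B) (J : B ⥤ D) (J' : A ⥤ E) (R' : D ⥤ E)
    (adj : RelAdjCore J' (L' ⋙ J) R') (T : RelMonad J) :
    (∀ x : A, transExt adj T (transUnit adj T x) = 𝟙 (R'.obj (T.obj (L'.obj x)))) ∧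
    (∀ (x y : A) (g : J'.obj x ⟶ R'.obj (T.obj (L'.obj y))),
      transUnit adj T x ≫ transExt adj T g = g) ∧
    (∀ (x y z : A) (g : J'.obj x ⟶ R'.obj (T.obj (L'.obj y)))
        (h : J'.obj y ⟶ R'.obj (T.obj (L'.obj z))),
      transExt adj T (g ≫ transExt adj T h) = transExt adj T g ≫ transExt adj T h) ∧
    (∀ (T₂ : RelMonad J) (τ : RelMonadHom T T₂),
      (∀ x : A, transUnit adj T x ≫ R'.map (τ.app (L'.obj x)) = transUnit adj T₂ x) ∧
      (∀ (x y : A) (g : J'.obj x ⟶ R'.obj (T.obj (L'.obj y))),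
        transExt adj T g ≫ R'.map (τ.app (L'.obj y)) =
          R'.map (τ.app (L'.obj x)) ≫ transExt adj T₂ (g ≫ R'.map (τ.app (L'.obj y))))) := by
  have symm_comp : ∀ {x : A} {c c' : D} (f : J'.obj x ⟶ R'.obj c) (h : c ⟶ c'),
      (adj.equiv x c').symm (f ≫ R'.map h) = (adj.equiv x c).symm f ≫ h := by
    intro x c c' f h
    apply (adj.equiv x c').injective
    rw [Equiv.apply_symm_apply, adj.nat_right, Equiv.apply_symm_apply]
  refine ⟨?_, ?_, ?_, ?_⟩
  · intro x
    simp [transExt, transUnit, Equiv.symm_apply_apply, T.ext_unit]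
  · intro x y g
    rw [transExt, transUnit, ← adj.nat_right, T.unit_ext, Equiv.apply_symm_apply]
  · intro x y z g h
    rw [transExt, transExt, transExt, symm_comp, T.ext_ext, Functor.map_comp]
  · intro T₂ τ
    constructor
    · intro x
      rw [transUnit, transUnit, ← adj.nat_right, τ.unit_app]
    · intro x y g
      rw [transExt, transExt, ← Functor.map_comp, τ.ext_app, Functor.map_comp, symm_comp]
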